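/- For every n ∈ ℕ₀, the Legendre polynomial P_n belongs to D(S): P_n ∈ Δ_{2,max}, lim_{x→±1}[P_n,1]₂(x) = 0 and lim_{x→±1}[P_n,x]₂(x) = 0; moreover ℓ²[P_n](x) = n²(n+1)²P_n(x) for all x ∈ (−1,1). -/

import Mathlib

open MeasureTheory Set Filter

noncomputable section

/-- `f` is locally absolutely continuous on `(-1,1)` with a.e. derivative `f'`,
expressed via the fundamental theorem of calculus. -/
def LocACOn (f f' : ℝ → ℂ) : Prop :=
  ∀ x ∈ Ioo (-1:ℝ) 1, ∀ y ∈ Ioo (-1:ℝ) 1,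
    IntervalIntegrable f' volume x y ∧ f y - f x = ∫ t in x..y, f' t

/-- membership in `L²(-1,1)` -/
def L2I (g : ℝ → ℂ) : Prop :=
  MemLp g 2 (volume.restrict (Ioo (-1:ℝ) 1))

/-- the Legendre expression `ℓ[f] = -((1-x²)f′)′ = -(1-x²)f″ + 2x f′`. -/
def leg (f1 f2 : ℝ → ℂ) (x : ℝ) : ℂ :=
  ((2*x : ℝ) : ℂ) * f1 x - ((1 - x^2 : ℝ) : ℂ) * f2 x

/-- the derivative `(ℓ[f])′ = 2f′ + 4x f″ - (1-x²)f‴`. -/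
def legD (f1 f2 f3 : ℝ → ℂ) (x : ℝ) : ℂ :=
  (2 : ℂ) * f1 x + ((4*x : ℝ) : ℂ) * f2 x - ((1 - x^2 : ℝ) : ℂ) * f3 x

/-- the second derivative `(ℓ[f])″ = 6f″ + 6x f‴ - (1-x²)f⁗`. -/
def legDD (f2 f3 f4 : ℝ → ℂ) (x : ℝ) : ℂ :=
  (6 : ℂ) * f2 x + ((6*x : ℝ) : ℂ) * f3 x - ((1 - x^2 : ℝ) : ℂ) * f4 x

/-- `ℓ²[f] = ((1-x²)²f″)″ - 2((1-x²)f′)′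
           = (1-x²)²f⁗ - 8x(1-x²)f‴ + (14x²-6)f″ + 4x f′`. -/
def legSq (f1 f2 f3 f4 : ℝ → ℂ) (x : ℝ) : ℂ :=
  (((1 - x^2)^2 : ℝ) : ℂ) * f4 x - ((8*x*(1 - x^2) : ℝ) : ℂ) * f3 x
    + ((14*x^2 - 6 : ℝ) : ℂ) * f2 x + ((4*x : ℝ) : ℂ) * f1 x

/-- `((1-x²)²f″)′ = (1-x²)²f‴ - 4x(1-x²)f″`. -/
def sqTermD (f2 f3 : ℝ → ℂ) (x : ℝ) : ℂ :=
  (((1 - x^2)^2 : ℝ) : ℂ) * f3 x - ((4*x*(1 - x^2) : ℝ) : ℂ) * f2 x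

/-- `[f,1]₂(x) = ((1-x²)²f″)′ - 2(1-x²)f′`. -/
def bket1 (f1 f2 f3 : ℝ → ℂ) (x : ℝ) : ℂ :=
  sqTermD f2 f3 x - ((2*(1 - x^2) : ℝ) : ℂ) * f1 x

/-- `[f,x]₂(x) = x[f,1]₂(x) - (1-x²)²f″ + 2(1-x²)f`. -/
def bketX (f f1 f2 f3 : ℝ → ℂ) (x : ℝ) : ℂ :=
  (x : ℂ) * bket1 f1 f2 f3 x - (((1 - x^2)^2 : ℝ) : ℂ) * f2 x
    + ((2*(1 - x^2) : ℝ) : ℂ) * f x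

/-- the maximal domain `Δ_{2,max}` of `ℓ²` in `L²(-1,1)`:
`f, f′, f″, f‴` locally absolutely continuous and `f, ℓ²[f] ∈ L²(-1,1)`. -/
def Delta2Max (f f1 f2 f3 f4 : ℝ → ℂ) : Prop :=
  LocACOn f f1 ∧ LocACOn f1 f2 ∧ LocACOn f2 f3 ∧ LocACOn f3 f4 ∧
    L2I f ∧ L2I (legSq f1 f2 f3 f4)

/-- the filter `x → 1⁻` from within `(-1,1)`. -/
def atOne : Filter ℝ := nhdsWithin 1 (Ioo (-1:ℝ) 1)

/-- the filter `x → -1⁺` from within `(-1,1)`. -/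
def atNegOne : Filter ℝ := nhdsWithin (-1) (Ioo (-1:ℝ) 1)

/-- the GKN domain `D(S)`. -/
def DS (f f1 f2 f3 f4 : ℝ → ℂ) : Prop :=
  Delta2Max f f1 f2 f3 f4 ∧
  Tendsto (bket1 f1 f2 f3) atOne (nhds 0) ∧
  Tendsto (bket1 f1 f2 f3) atNegOne (nhds 0) ∧
  Tendsto (bketX f f1 f2 f3) atOne (nhds 0) ∧
  Tendsto (bketX f f1 f2 f3) atNegOne (nhds 0)

/-- the maximal domain `Δ_{1,max}` of `ℓ` in `L²(-1,1)`. -/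
def Delta1Max (f f1 f2 : ℝ → ℂ) : Prop :=
  LocACOn f f1 ∧ LocACOn f1 f2 ∧ L2I f ∧ L2I (leg f1 f2)

/-- the domain `D(A)` of the Legendre polynomials operator. -/
def DA (f f1 f2 : ℝ → ℂ) : Prop :=
  Delta1Max f f1 f2 ∧
  Tendsto (fun x => ((1 - x^2 : ℝ) : ℂ) * f1 x) atOne (nhds 0) ∧
  Tendsto (fun x => ((1 - x^2 : ℝ) : ℂ) * f1 x) atNegOne (nhds 0)

/-- the algebraic domain `D(A²) = {f ∈ D(A) : ℓ[f] ∈ D(A)}`. -/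
def DA2 (f f1 f2 f3 f4 : ℝ → ℂ) : Prop :=
  DA f f1 f2 ∧ DA (leg f1 f2) (legD f1 f2 f3) (legDD f2 f3 f4)


open Polynomial in
lemma locAC_poly (Q : ℝ[X]) :
    LocACOn (fun x => ((Q.eval x : ℝ) : ℂ)) (fun x => ((Q.derivative.eval x : ℝ) : ℂ)) := by
  intro x _ y _
  refine ⟨(Complex.continuous_ofReal.comp Q.derivative.continuous_aeval).intervalIntegrable x y, ?_⟩
  rw [show (fun t => ((Q.derivative.eval t : ℝ) : ℂ)) = fun t => ((Q.derivative.eval t : ℝ) : ℂ) from rfl]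
  rw [intervalIntegral.integral_ofReal,
    intervalIntegral.integral_eq_sub_of_hasDerivAt (fun t _ => Q.hasDerivAt t)
      ((Q.derivative.continuous_aeval.intervalIntegrable x y))]
  push_cast; ring

lemma l2_of_continuous (g : ℝ → ℂ) (hg : Continuous g) : L2I g := by
  haveI : IsFiniteMeasure (volume.restrict (Ioo (-1:ℝ) 1)) := by
    constructor
    rw [Measure.restrict_apply_univ]
    exact measure_Ioo_lt_top
  obtain ⟨C, hC⟩ := (isCompact_Icc (a := (-1:ℝ)) (b := 1)).exists_bound_of_continuousOn
    hg.continuousOn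
  apply MemLp.of_bound hg.aestronglyMeasurable C
  apply ae_restrict_of_forall_mem measurableSet_Ioo
  intro x hx
  exact hC x (Ioo_subset_Icc_self hx)

/-- For every `n ∈ ℕ₀`, the Legendre polynomial `P_n` — the polynomial solution of
`-((1-x²)y′)′ = n(n+1)y` normalized by `P_n(1) = 1` — belongs to `D(S)`, and
`ℓ²[P_n] = n²(n+1)² P_n` on `(-1,1)`. -/
theorem legendre_poly_mem_DS (n : ℕ) (P : Polynomial ℝ)
    (hODE : Polynomial.derivative ((1 - Polynomial.X ^ 2) * Polynomial.derivative P)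
      = Polynomial.C (-((n : ℝ) * ((n : ℝ) + 1))) * P)
    (hnorm : P.eval 1 = 1) :
    DS (fun x => ((P.eval x : ℝ) : ℂ))
      (fun x => ((P.derivative.eval x : ℝ) : ℂ))
      (fun x => ((P.derivative.derivative.eval x : ℝ) : ℂ))
      (fun x => ((P.derivative.derivative.derivative.eval x : ℝ) : ℂ))
      (fun x => ((P.derivative.derivative.derivative.derivative.eval x : ℝ) : ℂ)) ∧
    ∀ x ∈ Ioo (-1:ℝ) 1,
      legSq (fun x => ((P.derivative.eval x : ℝ) : ℂ))
        (fun x => ((P.derivative.derivative.eval x : ℝ) : ℂ))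
        (fun x => ((P.derivative.derivative.derivative.eval x : ℝ) : ℂ))
        (fun x => ((P.derivative.derivative.derivative.derivative.eval x : ℝ) : ℂ)) x
        = ((n : ℂ)^2 * ((n : ℂ) + 1)^2) * ((P.eval x : ℝ) : ℂ) := by
  classical
  set c : ℝ := (n:ℝ) * ((n:ℝ) + 1) with hc
  -- algebraic identities from the ODE
  have h0 : ∀ x : ℝ, (1-x^2) * (P.derivative.derivative.eval x)
      - 2*x*(P.derivative.eval x) = -c * P.eval x := by
    intro x
    have h := congrArg (Polynomial.eval x) hODE
    simp [Polynomial.derivative_mul, Polynomial.derivative_sub, Polynomial.derivative_one,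
      Polynomial.derivative_X_pow] at h
    linear_combination h
  have h1 : ∀ x : ℝ, (1-x^2) * (P.derivative.derivative.derivative.eval x)
      - 4*x*(P.derivative.derivative.eval x) - 2*(P.derivative.eval x)
      = -c * P.derivative.eval x := by
    intro x
    have h := congrArg (Polynomial.eval x) (congrArg Polynomial.derivative hODE)
    simp [Polynomial.derivative_mul, Polynomial.derivative_sub, Polynomial.derivative_one,
      Polynomial.derivative_X_pow] at h
    linear_combination h
  have h2 : ∀ x : ℝ, (1-x^2) * (P.derivative.derivative.derivative.derivative.eval x)
      - 6*x*(P.derivative.derivative.derivative.eval x)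
      - 6*(P.derivative.derivative.eval x)
      = -c * P.derivative.derivative.eval x := by
    intro x
    have h := congrArg (Polynomial.eval x)
      (congrArg Polynomial.derivative (congrArg Polynomial.derivative hODE))
    simp [Polynomial.derivative_mul, Polynomial.derivative_sub, Polynomial.derivative_one,
      Polynomial.derivative_X_pow] at h
    linear_combination h
  have key : ∀ x : ℝ,
      (1 - x^2)^2 * (P.derivative.derivative.derivative.derivative.eval x)
        - 8*x*(1 - x^2) * (P.derivative.derivative.derivative.eval x)
        + (14*x^2 - 6) * (P.derivative.derivative.eval x)
        + 4*x * (P.derivative.eval x)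
      = c^2 * P.eval x := by
    intro x
    linear_combination (1-x^2) * h2 x + (-2*x) * h1 x + (-c) * h0 x
  -- continuity facts
  have cont0 : Continuous fun x : ℝ => ((P.eval x : ℝ) : ℂ) :=
    Complex.continuous_ofReal.comp P.continuous_aeval
  have cont1 : Continuous fun x : ℝ => ((P.derivative.eval x : ℝ) : ℂ) :=
    Complex.continuous_ofReal.comp P.derivative.continuous_aeval
  have cont2 : Continuous fun x : ℝ => ((P.derivative.derivative.eval x : ℝ) : ℂ) :=
    Complex.continuous_ofReal.comp P.derivative.derivative.continuous_aeval
  have cont3 : Continuous fun x : ℝ => ((P.derivative.derivative.derivative.eval x : ℝ) : ℂ) :=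
    Complex.continuous_ofReal.comp P.derivative.derivative.derivative.continuous_aeval
  have cont4 : Continuous fun x : ℝ =>
      ((P.derivative.derivative.derivative.derivative.eval x : ℝ) : ℂ) :=
    Complex.continuous_ofReal.comp P.derivative.derivative.derivative.derivative.continuous_aeval
  have contB1 : Continuous (bket1
      (fun x => ((P.derivative.eval x : ℝ) : ℂ))
      (fun x => ((P.derivative.derivative.eval x : ℝ) : ℂ))
      (fun x => ((P.derivative.derivative.derivative.eval x : ℝ) : ℂ))) := by
    unfold bket1 sqTermD
    fun_prop
  have contBX : Continuous (bketX
      (fun x => ((P.eval x : ℝ) : ℂ))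
      (fun x => ((P.derivative.eval x : ℝ) : ℂ))
      (fun x => ((P.derivative.derivative.eval x : ℝ) : ℂ))
      (fun x => ((P.derivative.derivative.derivative.eval x : ℝ) : ℂ))) := by
    unfold bketX bket1 sqTermD
    fun_prop
  have hb1 : ∀ s : ℝ, bket1
      (fun x => ((P.derivative.eval x : ℝ) : ℂ))
      (fun x => ((P.derivative.derivative.eval x : ℝ) : ℂ))
      (fun x => ((P.derivative.derivative.derivative.eval x : ℝ) : ℂ)) s = 0 →
      s = s := fun _ _ => rfl
  have b1one : bket1
      (fun x => ((P.derivative.eval x : ℝ) : ℂ))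
      (fun x => ((P.derivative.derivative.eval x : ℝ) : ℂ))
      (fun x => ((P.derivative.derivative.derivative.eval x : ℝ) : ℂ)) 1 = 0 := by
    simp [bket1, sqTermD]
  have b1neg : bket1
      (fun x => ((P.derivative.eval x : ℝ) : ℂ))
      (fun x => ((P.derivative.derivative.eval x : ℝ) : ℂ))
      (fun x => ((P.derivative.derivative.derivative.eval x : ℝ) : ℂ)) (-1) = 0 := by
    simp [bket1, sqTermD]
  have bXone : bketX
      (fun x => ((P.eval x : ℝ) : ℂ))
      (fun x => ((P.derivative.eval x : ℝ) : ℂ))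
      (fun x => ((P.derivative.derivative.eval x : ℝ) : ℂ))
      (fun x => ((P.derivative.derivative.derivative.eval x : ℝ) : ℂ)) 1 = 0 := by
    simp [bketX, bket1, sqTermD]
  have bXneg : bketX
      (fun x => ((P.eval x : ℝ) : ℂ))
      (fun x => ((P.derivative.eval x : ℝ) : ℂ))
      (fun x => ((P.derivative.derivative.eval x : ℝ) : ℂ))
      (fun x => ((P.derivative.derivative.derivative.eval x : ℝ) : ℂ)) (-1) = 0 := by
    simp [bketX, bket1, sqTermD]
  have hlegSq : ∀ x : ℝ,
      legSq (fun x => ((P.derivative.eval x : ℝ) : ℂ))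
        (fun x => ((P.derivative.derivative.eval x : ℝ) : ℂ))
        (fun x => ((P.derivative.derivative.derivative.eval x : ℝ) : ℂ))
        (fun x => ((P.derivative.derivative.derivative.derivative.eval x : ℝ) : ℂ)) x
        = ((n : ℂ)^2 * ((n : ℂ) + 1)^2) * ((P.eval x : ℝ) : ℂ) := by
    intro x
    have := key x
    simp only [legSq]
    have hcast : ((((1 - x^2)^2 * (P.derivative.derivative.derivative.derivative.eval x)
        - 8*x*(1 - x^2) * (P.derivative.derivative.derivative.eval x)
        + (14*x^2 - 6) * (P.derivative.derivative.eval x)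
        + 4*x * (P.derivative.eval x) : ℝ)) : ℂ)
        = (((c^2 * P.eval x : ℝ)) : ℂ) := by exact_mod_cast congrArg Complex.ofReal this
    push_cast at hcast ⊢
    rw [hc] at hcast
    push_cast at hcast
    linear_combination hcast
  refine ⟨⟨⟨locAC_poly P, locAC_poly P.derivative, locAC_poly P.derivative.derivative,
      locAC_poly P.derivative.derivative.derivative,
      l2_of_continuous _ cont0, l2_of_continuous _ ?_⟩, ?_, ?_, ?_, ?_⟩,
    fun x _ => hlegSq x⟩
  · unfold legSq; fun_prop
  · have := (contB1.tendsto 1).mono_left (nhdsWithin_le_nhds (s := Ioo (-1:ℝ) 1))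
    rw [b1one] at this
    exact this
  · have := (contB1.tendsto (-1)).mono_left (nhdsWithin_le_nhds (s := Ioo (-1:ℝ) 1))
    rw [b1neg] at this
    exact this
  · have := (contBX.tendsto 1).mono_left (nhdsWithin_le_nhds (s := Ioo (-1:ℝ) 1))
    rw [bXone] at this
    exact this
  · have := (contBX.tendsto (-1)).mono_left (nhdsWithin_le_nhds (s := Ioo (-1:ℝ) 1))
    rw [bXneg] at this
    exact this
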